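/- Fix κ > 0 and let g_κ(r) := e^{−κr}/(4πr). For any six distinct points y₁, …, y₆ on the unit sphere S² ⊂ ℝ³, ∑_{j ≠ j'} g_κ(‖y_j − y_{j'}‖) ≥ 24 g_κ(√2) + 6 g_κ(2), with equality if and only if the six points are the vertices of a regular octahedron inscribed in the sphere, i.e. there exist pairwise orthogonal unit vectors u, v, w with {y₁, …, y₆} = {±u, ±v, ±w}. -/

import Mathlib

/-- The free resolvent kernel of `−Δ` in `ℝ³` at energy `−κ²`:
`g_κ(r) = e^{−κr}/(4πr)`. -/
noncomputable def resolventKernel3D (κ r : ℝ) : ℝ :=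
  Real.exp (-κ * r) / (4 * Real.pi * r)

/-- The interaction energy `∑_{j ≠ j'} g_κ(‖y_j − y_{j'}‖)` of a family of points,
the sum running over ordered pairs of distinct indices. -/
noncomputable def interactionEnergy {n : ℕ} (κ : ℝ)
    (y : Fin n → EuclideanSpace ℝ (Fin 3)) : ℝ :=
  ∑ p ∈ Finset.univ.offDiag, resolventKernel3D κ ‖y p.1 - y p.2‖


open Real

noncomputable def FF0 (κ t : ℝ) : ℝ := Real.exp (-κ * Real.sqrt t) / Real.sqrt t
noncomputable def FF1 (κ t : ℝ) : ℝ :=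
  -(Real.exp (-κ * Real.sqrt t) * (κ * Real.sqrt t + 1)) / (2 * Real.sqrt t ^ 3)
noncomputable def FF2 (κ t : ℝ) : ℝ :=
  Real.exp (-κ * Real.sqrt t) * (κ^2 * Real.sqrt t ^2 + 3*κ*Real.sqrt t + 3) / (4 * Real.sqrt t ^ 5)
noncomputable def FF3 (κ t : ℝ) : ℝ :=
  -(Real.exp (-κ * Real.sqrt t) * (κ^3 * Real.sqrt t^3 + 6*κ^2*Real.sqrt t^2 + 15*κ*Real.sqrt t + 15)) / (8 * Real.sqrt t ^ 7)
noncomputable def FF4 (κ t : ℝ) : ℝ :=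
  Real.exp (-κ * Real.sqrt t) * (κ^4*Real.sqrt t^4 + 10*κ^3*Real.sqrt t^3 + 45*κ^2*Real.sqrt t^2 + 105*κ*Real.sqrt t + 105) / (16 * Real.sqrt t ^ 9)

section deriv
variable {κ t : ℝ}

lemma sqrt_pos' (ht : 0 < t) : 0 < Real.sqrt t := Real.sqrt_pos.2 ht

lemma hasDerivAt_FF0 (ht : 0 < t) : HasDerivAt (FF0 κ) (FF1 κ t) t := by
  have hs : (0:ℝ) < Real.sqrt t := Real.sqrt_pos.2 ht
  have hx : HasDerivAt Real.sqrt (1/(2*Real.sqrt t)) t := Real.hasDerivAt_sqrt ht.ne'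
  have h2 : HasDerivAt (fun t => Real.exp (-κ * Real.sqrt t))
      (Real.exp (-κ * Real.sqrt t) * (-κ * (1/(2*Real.sqrt t)))) t := (hx.const_mul (-κ)).exp
  have h := h2.div hx hs.ne'
  convert h using 1 <;> try rfl
  unfold FF1
  set s := Real.sqrt t with hsdef
  have hst : s^2 = t := Real.sq_sqrt ht.le
  field_simp
  try rw [← hst]
  ring

lemma hasDerivAt_FF1 (ht : 0 < t) : HasDerivAt (FF1 κ) (FF2 κ t) t := by
  have hs : (0:ℝ) < Real.sqrt t := Real.sqrt_pos.2 ht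
  have hx : HasDerivAt Real.sqrt (1/(2*Real.sqrt t)) t := Real.hasDerivAt_sqrt ht.ne'
  have h2 : HasDerivAt (fun t => Real.exp (-κ * Real.sqrt t))
      (Real.exp (-κ * Real.sqrt t) * (-κ * (1/(2*Real.sqrt t)))) t := (hx.const_mul (-κ)).exp
  have hN : HasDerivAt (fun t => -(Real.exp (-κ * Real.sqrt t) * (κ * Real.sqrt t + 1)))
      (-(Real.exp (-κ * Real.sqrt t) * (-κ * (1/(2*Real.sqrt t))) * (κ * Real.sqrt t + 1)
        + Real.exp (-κ * Real.sqrt t) * (κ * (1/(2*Real.sqrt t))))) t :=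
    (h2.mul ((hx.const_mul κ).add_const 1)).neg
  have hD : HasDerivAt (fun t => 2 * Real.sqrt t ^ 3)
      (2 * ((3:ℕ) * Real.sqrt t ^ 2 * (1/(2*Real.sqrt t)))) t := ((hx.pow 3).const_mul 2)
  have hDne : 2 * Real.sqrt t ^ 3 ≠ 0 := by positivity
  have h := hN.div hD hDne
  convert h using 1 <;> try rfl
  unfold FF2
  set s := Real.sqrt t with hsdef
  have hst : s^2 = t := Real.sq_sqrt ht.le
  field_simp
  try rw [← hst]
  ring

lemma hasDerivAt_FF2 (ht : 0 < t) : HasDerivAt (FF2 κ) (FF3 κ t) t := by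
  have hs : (0:ℝ) < Real.sqrt t := Real.sqrt_pos.2 ht
  have hx : HasDerivAt Real.sqrt (1/(2*Real.sqrt t)) t := Real.hasDerivAt_sqrt ht.ne'
  have h2 : HasDerivAt (fun t => Real.exp (-κ * Real.sqrt t))
      (Real.exp (-κ * Real.sqrt t) * (-κ * (1/(2*Real.sqrt t)))) t := (hx.const_mul (-κ)).exp
  have hP : HasDerivAt (fun t => κ^2 * Real.sqrt t ^2 + 3*κ*Real.sqrt t + 3)
      ((κ^2 * ((2:ℕ) * Real.sqrt t ^1 * (1/(2*Real.sqrt t)))) + 3*κ*(1/(2*Real.sqrt t))) t := by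
    exact (((hx.pow 2).const_mul (κ^2)).add (hx.const_mul (3*κ))).add_const 3
  have hN := h2.mul hP
  have hD : HasDerivAt (fun t => 4 * Real.sqrt t ^ 5)
      (4 * ((5:ℕ) * Real.sqrt t ^ 4 * (1/(2*Real.sqrt t)))) t := ((hx.pow 5).const_mul 4)
  have hDne : 4 * Real.sqrt t ^ 5 ≠ 0 := by positivity
  have h := hN.div hD hDne
  convert h using 1 <;> try rfl
  unfold FF3
  simp only [Pi.mul_apply, Pi.neg_apply]
  set s := Real.sqrt t with hsdef
  have hst : s^2 = t := Real.sq_sqrt ht.le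
  field_simp
  try rw [← hst]
  ring

lemma hasDerivAt_FF3 (ht : 0 < t) : HasDerivAt (FF3 κ) (FF4 κ t) t := by
  have hs : (0:ℝ) < Real.sqrt t := Real.sqrt_pos.2 ht
  have hx : HasDerivAt Real.sqrt (1/(2*Real.sqrt t)) t := Real.hasDerivAt_sqrt ht.ne'
  have h2 : HasDerivAt (fun t => Real.exp (-κ * Real.sqrt t))
      (Real.exp (-κ * Real.sqrt t) * (-κ * (1/(2*Real.sqrt t)))) t := (hx.const_mul (-κ)).exp
  have hP : HasDerivAt (fun t => κ^3 * Real.sqrt t^3 + 6*κ^2*Real.sqrt t^2 + 15*κ*Real.sqrt t + 15)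
      ((κ^3 * ((3:ℕ) * Real.sqrt t ^2 * (1/(2*Real.sqrt t)))) + (6*κ^2) * ((2:ℕ) * Real.sqrt t ^1 * (1/(2*Real.sqrt t))) + 15*κ*(1/(2*Real.sqrt t))) t := by
    exact ((((hx.pow 3).const_mul (κ^3)).add ((hx.pow 2).const_mul (6*κ^2))).add (hx.const_mul (15*κ))).add_const 15
  have hN := (h2.mul hP).neg
  have hD : HasDerivAt (fun t => 8 * Real.sqrt t ^ 7)
      (8 * ((7:ℕ) * Real.sqrt t ^ 6 * (1/(2*Real.sqrt t)))) t := ((hx.pow 7).const_mul 8)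
  have hDne : 8 * Real.sqrt t ^ 7 ≠ 0 := by positivity
  have h := hN.div hD hDne
  convert h using 1 <;> try rfl
  unfold FF4
  simp only [Pi.mul_apply, Pi.neg_apply]
  set s := Real.sqrt t with hsdef
  have hst : s^2 = t := Real.sq_sqrt ht.le
  field_simp
  try rw [← hst]
  ring

lemma FF1_neg (hκ : 0 < κ) (ht : 0 < t) : FF1 κ t < 0 := by
  have hs : (0:ℝ) < Real.sqrt t := Real.sqrt_pos.2 ht
  have h1 : 0 < Real.exp (-κ * Real.sqrt t) * (κ * Real.sqrt t + 1) := by positivity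
  have h2 : (0:ℝ) < 2 * Real.sqrt t ^ 3 := by positivity
  exact div_neg_of_neg_of_pos (neg_neg_of_pos h1) h2

lemma FF2_pos (hκ : 0 < κ) (ht : 0 < t) : 0 < FF2 κ t := by
  have hs : (0:ℝ) < Real.sqrt t := Real.sqrt_pos.2 ht
  unfold FF2; positivity

lemma FF3_neg (hκ : 0 < κ) (ht : 0 < t) : FF3 κ t < 0 := by
  have hs : (0:ℝ) < Real.sqrt t := Real.sqrt_pos.2 ht
  have h1 : 0 < Real.exp (-κ * Real.sqrt t) * (κ^3 * Real.sqrt t^3 + 6*κ^2*Real.sqrt t^2 + 15*κ*Real.sqrt t + 15) := by positivity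
  have h2 : (0:ℝ) < 8 * Real.sqrt t ^ 7 := by positivity
  exact div_neg_of_neg_of_pos (neg_neg_of_pos h1) h2

lemma FF4_pos (hκ : 0 < κ) (ht : 0 < t) : 0 < FF4 κ t := by
  have hs : (0:ℝ) < Real.sqrt t := Real.sqrt_pos.2 ht
  unfold FF4; positivity

end deriv

noncomputable section

/-- coefficients of the Hermite interpolating cubic (times 4π) -/
def ca0 (κ : ℝ) : ℝ := FF0 κ 2
def ca1 (κ : ℝ) : ℝ := FF1 κ 2
def ca2 (κ : ℝ) : ℝ := (FF0 κ 4 - FF0 κ 2 - 2 * FF1 κ 2) / 4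
def ca3 (κ : ℝ) : ℝ := (FF1 κ 4 + FF1 κ 2 - FF0 κ 4 + FF0 κ 2) / 4

/-- generic cubic in Newton form plus multiple of the quartic node polynomial, with derivatives -/
def Psi0 (A B C D m : ℝ) (t : ℝ) : ℝ :=
  A + B*(t-2) + C*(t-2)^2 + D*((t-2)^2*(t-4)) + m * ((t-2)^2*(t-4)^2)
def Psi1 (B C D m : ℝ) (t : ℝ) : ℝ :=
  B + 2*C*(t-2) + D*(2*(t-2)*(t-4)+(t-2)^2) + m * (2*(t-2)*(t-4)^2 + (t-2)^2*(2*(t-4)))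
def Psi2 (C D m : ℝ) (t : ℝ) : ℝ :=
  2*C + D*(6*t-16) + m * (2*(t-4)^2 + 8*(t-2)*(t-4) + 2*(t-2)^2)
def Psi3 (D m : ℝ) (t : ℝ) : ℝ := 6*D + m * (24*t - 72)

lemma hasDerivAt_Psi0 (A B C D m t : ℝ) :
    HasDerivAt (Psi0 A B C D m) (Psi1 B C D m t) t := by
  have h2 : HasDerivAt (fun x : ℝ => x - 2) 1 t := (hasDerivAt_id t).sub_const 2
  have h4 : HasDerivAt (fun x : ℝ => x - 4) 1 t := (hasDerivAt_id t).sub_const 4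
  have hsq : HasDerivAt (fun x : ℝ => (x-2)^2) (2*(t-2)) t := by
    exact (h2.pow 2).congr_deriv (by norm_num)
  have hsq4 : HasDerivAt (fun x : ℝ => (x-4)^2) (2*(t-4)) t := by
    exact (h4.pow 2).congr_deriv (by norm_num)
  have hcb : HasDerivAt (fun x : ℝ => (x-2)^2*(x-4)) (2*(t-2)*(t-4)+(t-2)^2) t := by
    have := hsq.mul h4
    convert this using 1 <;> (try rfl); ring
  have hq : HasDerivAt (fun x : ℝ => (x-2)^2*(x-4)^2)
      (2*(t-2)*(t-4)^2 + (t-2)^2*(2*(t-4))) t := by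
    have := hsq.mul hsq4
    convert this using 1 <;> (try rfl); try ring
  have := ((((hasDerivAt_const t A).add (h2.const_mul B)).add
      (hsq.const_mul C)).add (hcb.const_mul D)).add (hq.const_mul m)
  convert this using 1
  all_goals first
    | rfl
    | ring1
    | (funext x; simp only [Psi0,Psi1,Psi2,Psi3]; try ring1)
    | (simp only [Psi0,Psi1,Psi2,Psi3]; ring1)

lemma hasDerivAt_Psi1 (B C D m t : ℝ) :
    HasDerivAt (Psi1 B C D m) (Psi2 C D m t) t := by
  have h2 : HasDerivAt (fun x : ℝ => x - 2) 1 t := (hasDerivAt_id t).sub_const 2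
  have h4 : HasDerivAt (fun x : ℝ => x - 4) 1 t := (hasDerivAt_id t).sub_const 4
  have hsq : HasDerivAt (fun x : ℝ => (x-2)^2) (2*(t-2)) t := by exact (h2.pow 2).congr_deriv (by norm_num)
  have hsq4 : HasDerivAt (fun x : ℝ => (x-4)^2) (2*(t-4)) t := by exact (h4.pow 2).congr_deriv (by norm_num)
  have hmul : HasDerivAt (fun x : ℝ => (x-2)*(x-4)) ((t-4)+(t-2)) t := by
    have := h2.mul h4; convert this using 1 <;> (try rfl); ring
  have hA : HasDerivAt (fun x : ℝ => 2*(x-2)*(x-4)+(x-2)^2)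
      (2*((t-4)+(t-2)) + 2*(t-2)) t := by
    have := (hmul.const_mul 2).add hsq
    convert this using 1 <;> (try rfl)
    · funext x; simp only [Pi.add_apply]; ring
  have hB : HasDerivAt (fun x : ℝ => 2*(x-2)*(x-4)^2 + (x-2)^2*(2*(x-4)))
      (2*((t-4)^2 + (t-2)*(2*(t-4))) + (2*(t-2)*(2*(t-4)) + (t-2)^2*2)) t := by
    have hm1 : HasDerivAt (fun x : ℝ => (x-2)*(x-4)^2) ((t-4)^2 + (t-2)*(2*(t-4))) t :=
      by have := h2.mul hsq4; convert this using 1 <;> (try rfl); ring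
    have hm2 : HasDerivAt (fun x : ℝ => (x-2)^2*(x-4)) ((2*(t-2))*(t-4) + (t-2)^2) t :=
      by have := hsq.mul h4; convert this using 1 <;> (try rfl); ring
    have := (hm1.const_mul 2).add (hm2.const_mul 2)
    convert this using 1 <;> (try rfl)
    · funext x; simp only [Pi.add_apply]; ring
    · ring
  have := (((hasDerivAt_const t B).add (h2.const_mul (2*C))).add
      (hA.const_mul D)).add (hB.const_mul m)
  convert this using 1
  all_goals first
    | rfl
    | ring1
    | (funext x; simp only [Psi0,Psi1,Psi2,Psi3]; try ring1)
    | (simp only [Psi0,Psi1,Psi2,Psi3]; ring1)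

lemma hasDerivAt_Psi2 (C D m t : ℝ) :
    HasDerivAt (Psi2 C D m) (Psi3 D m t) t := by
  have h2 : HasDerivAt (fun x : ℝ => x - 2) 1 t := (hasDerivAt_id t).sub_const 2
  have h4 : HasDerivAt (fun x : ℝ => x - 4) 1 t := (hasDerivAt_id t).sub_const 4
  have hsq : HasDerivAt (fun x : ℝ => (x-2)^2) (2*(t-2)) t := by exact (h2.pow 2).congr_deriv (by norm_num)
  have hsq4 : HasDerivAt (fun x : ℝ => (x-4)^2) (2*(t-4)) t := by exact (h4.pow 2).congr_deriv (by norm_num)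
  have hmul : HasDerivAt (fun x : ℝ => (x-2)*(x-4)) ((t-4)+(t-2)) t := by
    have := h2.mul h4; convert this using 1 <;> (try rfl); ring
  have hlin : HasDerivAt (fun x : ℝ => 6*x - 16) 6 t := by
    simpa using ((hasDerivAt_id t).const_mul 6).sub_const 16
  have hq : HasDerivAt (fun x : ℝ => 2*(x-4)^2 + 8*(x-2)*(x-4) + 2*(x-2)^2)
      (2*(2*(t-4)) + 8*((t-4)+(t-2)) + 2*(2*(t-2))) t := by
    have := ((hsq4.const_mul 2).add (hmul.const_mul 8)).add (hsq.const_mul 2)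
    convert this using 1 <;> (try rfl)
    · funext x; simp only [Pi.add_apply]; ring
  have := ((hasDerivAt_const t (2*C)).add (hlin.const_mul D)).add (hq.const_mul m)
  convert this using 1
  all_goals first
    | rfl
    | ring1
    | (funext x; simp only [Psi0,Psi1,Psi2,Psi3]; try ring1)
    | (simp only [Psi0,Psi1,Psi2,Psi3]; ring1)

lemma hasDerivAt_Psi3 (D m t : ℝ) : HasDerivAt (Psi3 D m) (m * 24) t := by
  have hlin : HasDerivAt (fun x : ℝ => 24*x - 72) 24 t := by
    simpa using ((hasDerivAt_id t).const_mul 24).sub_const 72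
  have := (hasDerivAt_const t (6*D)).add (hlin.const_mul m)
  convert this using 1
  all_goals first
    | rfl
    | ring1
    | (funext x; simp only [Psi0,Psi1,Psi2,Psi3]; try ring1)
    | (simp only [Psi0,Psi1,Psi2,Psi3]; ring1)

/-- Rolle helper on (0,∞). -/
lemma rolle_pos {f f' : ℝ → ℝ} (hf : ∀ x, 0 < x → HasDerivAt f (f' x) x)
    {a b : ℝ} (h0 : 0 < a) (hab : a < b) (ha : f a = 0) (hb : f b = 0) :
    ∃ c, a < c ∧ c < b ∧ f' c = 0 := by
  have hcont : ContinuousOn f (Set.Icc a b) := fun x hx =>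
    ((hf x (lt_of_lt_of_le h0 hx.1)).continuousAt).continuousWithinAt
  obtain ⟨c, hc, hc'⟩ := exists_hasDerivAt_eq_zero hab hcont (ha.trans hb.symm)
    (fun x hx => hf x (lt_trans h0 hx.1))
  exact ⟨c, hc.1, hc.2, hc'⟩

end

section interp
variable {κ : ℝ}

lemma Psi0_at2 (A B C D m : ℝ) : Psi0 A B C D m 2 = A := by simp [Psi0]
lemma Psi0_at4 (A B C D m : ℝ) : Psi0 A B C D m 4 = A + 2*B + 4*C := by
  simp [Psi0]; ring
lemma Psi1_at2 (B C D m : ℝ) : Psi1 B C D m 2 = B := by simp [Psi1]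
lemma Psi1_at4 (B C D m : ℝ) : Psi1 B C D m 4 = B + 4*C + 4*D := by
  simp [Psi1]; ring

lemma ca_node4 : ca0 κ + 2 * ca1 κ + 4 * ca2 κ = FF0 κ 4 := by
  simp only [ca0, ca1, ca2]; ring
lemma ca_node4' : ca1 κ + 4 * ca2 κ + 4 * ca3 κ = FF1 κ 4 := by
  simp only [ca0, ca1, ca2, ca3]; ring

/-- Rolle chain: if `FF1 - Psi1` vanishes at four increasing positive points,
then `FF4 κ ξ = m * 24` somewhere. -/
lemma chain4 (hκ : 0 < κ) {B C D m : ℝ} {p1 p2 p3 p4 : ℝ}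
    (h0 : 0 < p1) (h12 : p1 < p2) (h23 : p2 < p3) (h34 : p3 < p4)
    (e1 : FF1 κ p1 - Psi1 B C D m p1 = 0)
    (e2 : FF1 κ p2 - Psi1 B C D m p2 = 0)
    (e3 : FF1 κ p3 - Psi1 B C D m p3 = 0)
    (e4 : FF1 κ p4 - Psi1 B C D m p4 = 0) :
    ∃ ξ, 0 < ξ ∧ FF4 κ ξ = m * 24 := by
  have hd1 : ∀ x, 0 < x → HasDerivAt (fun t => FF1 κ t - Psi1 B C D m t)
      (FF2 κ x - Psi2 C D m x) x :=
    fun x hx => (hasDerivAt_FF1 hx).sub (hasDerivAt_Psi1 B C D m x)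
  have hd2 : ∀ x, 0 < x → HasDerivAt (fun t => FF2 κ t - Psi2 C D m t)
      (FF3 κ x - Psi3 D m x) x :=
    fun x hx => (hasDerivAt_FF2 hx).sub (hasDerivAt_Psi2 C D m x)
  have hd3 : ∀ x, 0 < x → HasDerivAt (fun t => FF3 κ t - Psi3 D m t)
      (FF4 κ x - m * 24) x :=
    fun x hx => (hasDerivAt_FF3 hx).sub (hasDerivAt_Psi3 D m x)
  obtain ⟨q1, hq1a, hq1b, hq1⟩ := rolle_pos hd1 h0 h12 e1 e2
  obtain ⟨q2, hq2a, hq2b, hq2⟩ := rolle_pos hd1 (h0.trans h12) h23 e2 e3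
  obtain ⟨q3, hq3a, hq3b, hq3⟩ := rolle_pos hd1 ((h0.trans h12).trans h23) h34 e3 e4
  obtain ⟨r1, hr1a, hr1b, hr1⟩ := rolle_pos hd2 (h0.trans hq1a) (hq1b.trans hq2a) hq1 hq2
  obtain ⟨r2, hr2a, hr2b, hr2⟩ := rolle_pos hd2 ((h0.trans h12).trans hq2a)
    (hq2b.trans hq3a) hq2 hq3
  obtain ⟨ξ, hξa, hξb, hξ⟩ := rolle_pos hd3 (lt_trans (h0.trans hq1a) hr1a)
    (hr1b.trans hr2a) hr1 hr2
  exact ⟨ξ, lt_trans (lt_trans (h0.trans hq1a) hr1a) hξa, by linarith [hξ]⟩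

lemma ca2_pos (hκ : 0 < κ) : 0 < ca2 κ := by
  set A := ca0 κ; set B := ca1 κ; set C := ca2 κ
  have hd0 : ∀ x, 0 < x → HasDerivAt (fun t => FF0 κ t - Psi0 A B C 0 0 t)
      (FF1 κ x - Psi1 B C 0 0 x) x :=
    fun x hx => (hasDerivAt_FF0 hx).sub (hasDerivAt_Psi0 A B C 0 0 x)
  have hd1 : ∀ x, 0 < x → HasDerivAt (fun t => FF1 κ t - Psi1 B C 0 0 t)
      (FF2 κ x - Psi2 C 0 0 x) x :=
    fun x hx => (hasDerivAt_FF1 hx).sub (hasDerivAt_Psi1 B C 0 0 x)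
  have e2 : FF0 κ 2 - Psi0 A B C 0 0 2 = 0 := by rw [Psi0_at2]; simp [A, ca0]
  have e4 : FF0 κ 4 - Psi0 A B C 0 0 4 = 0 := by
    rw [Psi0_at4]
    have := @ca_node4 κ; simp only [A, B, C]; linarith
  obtain ⟨z, hza, hzb, hz⟩ := rolle_pos hd0 (by norm_num) (by norm_num : (2:ℝ) < 4) e2 e4
  have e1 : FF1 κ 2 - Psi1 B C 0 0 2 = 0 := by rw [Psi1_at2]; simp [B, ca1]
  obtain ⟨ζ, hζa, hζb, hζ⟩ := rolle_pos hd1 (by norm_num) hza e1 hz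
  have h2 : Psi2 C 0 0 ζ = 2*C := by simp [Psi2]
  have := FF2_pos hκ (lt_trans (by norm_num) hζa : (0:ℝ) < ζ)
  rw [h2] at hζ; linarith

lemma ca3_neg (hκ : 0 < κ) : ca3 κ < 0 := by
  set A := ca0 κ; set B := ca1 κ; set C := ca2 κ; set D := ca3 κ
  have hd0 : ∀ x, 0 < x → HasDerivAt (fun t => FF0 κ t - Psi0 A B C D 0 t)
      (FF1 κ x - Psi1 B C D 0 x) x :=
    fun x hx => (hasDerivAt_FF0 hx).sub (hasDerivAt_Psi0 A B C D 0 x)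
  have hd1 : ∀ x, 0 < x → HasDerivAt (fun t => FF1 κ t - Psi1 B C D 0 t)
      (FF2 κ x - Psi2 C D 0 x) x :=
    fun x hx => (hasDerivAt_FF1 hx).sub (hasDerivAt_Psi1 B C D 0 x)
  have hd2 : ∀ x, 0 < x → HasDerivAt (fun t => FF2 κ t - Psi2 C D 0 t)
      (FF3 κ x - Psi3 D 0 x) x :=
    fun x hx => (hasDerivAt_FF2 hx).sub (hasDerivAt_Psi2 C D 0 x)
  have e2 : FF0 κ 2 - Psi0 A B C D 0 2 = 0 := by rw [Psi0_at2]; simp [A, ca0]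
  have e4 : FF0 κ 4 - Psi0 A B C D 0 4 = 0 := by
    rw [Psi0_at4]
    have := @ca_node4 κ; simp only [A, B, C]; linarith
  obtain ⟨z, hza, hzb, hz⟩ := rolle_pos hd0 (by norm_num) (by norm_num : (2:ℝ) < 4) e2 e4
  have f2 : FF1 κ 2 - Psi1 B C D 0 2 = 0 := by rw [Psi1_at2]; simp [B, ca1]
  have f4 : FF1 κ 4 - Psi1 B C D 0 4 = 0 := by
    rw [Psi1_at4]
    have := @ca_node4' κ; simp only [B, C, D]; linarith
  obtain ⟨w1, hw1a, hw1b, hw1⟩ := rolle_pos hd1 (by norm_num) hza f2 hz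
  obtain ⟨w2, hw2a, hw2b, hw2⟩ := rolle_pos hd1 (lt_trans (by norm_num) hza) hzb hz f4
  obtain ⟨ζ, hζa, hζb, hζ⟩ := rolle_pos hd2 (lt_trans (by norm_num) hw1a)
    (hw1b.trans hw2a) hw1 hw2
  have h3 : Psi3 D 0 ζ = 6*D := by simp [Psi3]
  have hff3 := FF3_neg hκ (lt_trans (lt_trans (by norm_num) hw1a) hζa : (0:ℝ) < ζ)
  rw [h3] at hζ; linarith

lemma ca1_neg (hκ : 0 < κ) : ca1 κ < 0 := FF1_neg hκ (by norm_num)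

lemma FF0_strict_dec (hκ : 0 < κ) : FF0 κ 4 < FF0 κ 2 := by
  have hd : ∀ x ∈ Set.Ioo (2:ℝ) 4, HasDerivAt (FF0 κ) (FF1 κ x) x :=
    fun x hx => hasDerivAt_FF0 (lt_trans (by norm_num) hx.1)
  have hcont : ContinuousOn (FF0 κ) (Set.Icc 2 4) := fun x hx =>
    ((hasDerivAt_FF0 (lt_of_lt_of_le (by norm_num) hx.1)).continuousAt).continuousWithinAt
  obtain ⟨c, hc, hc'⟩ := exists_hasDerivAt_eq_slope (FF0 κ) (FF1 κ)
    (by norm_num : (2:ℝ) < 4) hcont hd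
  have := FF1_neg hκ (lt_trans (by norm_num) hc.1 : (0:ℝ) < c)
  rw [hc'] at this
  have h4 : (4:ℝ) - 2 = 2 := by norm_num
  rw [h4] at this
  nlinarith

/-- The key pointwise interpolation inequality, strict away from the nodes. -/
lemma interp_strict (hκ : 0 < κ) {t : ℝ} (ht0 : 0 < t) (ht4 : t ≤ 4)
    (h2 : t ≠ 2) (h4 : t ≠ 4) :
    Psi0 (ca0 κ) (ca1 κ) (ca2 κ) (ca3 κ) 0 t < FF0 κ t := by
  set A := ca0 κ; set B := ca1 κ; set C := ca2 κ; set D := ca3 κ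
  by_contra hle
  push_neg at hle
  have hqt : 0 < (t-2)^2*(t-4)^2 := by
    have : t - 2 ≠ 0 := sub_ne_zero.2 h2
    have : t - 4 ≠ 0 := sub_ne_zero.2 h4
    positivity
  set m := (FF0 κ t - Psi0 A B C D 0 t) / ((t-2)^2*(t-4)^2) with hm_def
  have hm : m ≤ 0 := div_nonpos_of_nonpos_of_nonneg (by linarith) hqt.le
  have hsplit : ∀ x, Psi0 A B C D m x = Psi0 A B C D 0 x + m * ((x-2)^2*(x-4)^2) := by
    intro x; simp only [Psi0]; ring
  have hd0 : ∀ x, 0 < x → HasDerivAt (fun s => FF0 κ s - Psi0 A B C D m s)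
      (FF1 κ x - Psi1 B C D m x) x :=
    fun x hx => (hasDerivAt_FF0 hx).sub (hasDerivAt_Psi0 A B C D m x)
  have et : FF0 κ t - Psi0 A B C D m t = 0 := by
    rw [hsplit, hm_def, div_mul_cancel₀ _ hqt.ne']; ring
  have e2 : FF0 κ 2 - Psi0 A B C D m 2 = 0 := by rw [Psi0_at2]; simp [A, ca0]
  have e4 : FF0 κ 4 - Psi0 A B C D m 4 = 0 := by
    rw [Psi0_at4]
    have := @ca_node4 κ; simp only [A, B, C]; linarith
  have f2 : FF1 κ 2 - Psi1 B C D m 2 = 0 := by rw [Psi1_at2]; simp [B, ca1]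
  have f4 : FF1 κ 4 - Psi1 B C D m 4 = 0 := by
    rw [Psi1_at4]
    have := @ca_node4' κ; simp only [B, C, D]; linarith
  have final : ∃ ξ, 0 < ξ ∧ FF4 κ ξ = m * 24 := by
    rcases lt_or_gt_of_ne h2 with hlt | hgt
    · -- t < 2
      obtain ⟨r1, hr1a, hr1b, hr1⟩ := rolle_pos hd0 ht0 hlt et e2
      obtain ⟨r2, hr2a, hr2b, hr2⟩ := rolle_pos hd0 (by norm_num)
        (by norm_num : (2:ℝ) < 4) e2 e4
      exact chain4 hκ (ht0.trans hr1a) hr1b hr2a hr2b hr1 f2 hr2 f4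
    · -- 2 < t (and t < 4 since t ≤ 4, t ≠ 4)
      have ht4' : t < 4 := lt_of_le_of_ne ht4 h4
      obtain ⟨r1, hr1a, hr1b, hr1⟩ := rolle_pos hd0 (by norm_num) hgt e2 et
      obtain ⟨r2, hr2a, hr2b, hr2⟩ := rolle_pos hd0 (lt_trans (by norm_num) hgt)
        ht4' et e4
      exact chain4 hκ (by norm_num) hr1a (hr1b.trans hr2a) hr2b f2 hr1 hr2 f4
  obtain ⟨ξ, hξ0, hξ⟩ := final
  have := FF4_pos hκ hξ0
  rw [hξ] at this
  linarith

/-- Combined: `h ≤ f` on `(0,4]`, with equality exactly at the nodes. -/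
lemma interp_le (hκ : 0 < κ) {t : ℝ} (ht0 : 0 < t) (ht4 : t ≤ 4) :
    Psi0 (ca0 κ) (ca1 κ) (ca2 κ) (ca3 κ) 0 t ≤ FF0 κ t := by
  rcases eq_or_ne t 2 with rfl | h2
  · rw [Psi0_at2]; simp [ca0]
  rcases eq_or_ne t 4 with rfl | h4
  · rw [Psi0_at4]
    have := @ca_node4 κ; linarith
  exact (interp_strict hκ ht0 ht4 h2 h4).le

lemma interp_eq_iff (hκ : 0 < κ) {t : ℝ} (ht0 : 0 < t) (ht4 : t ≤ 4) :
    FF0 κ t = Psi0 (ca0 κ) (ca1 κ) (ca2 κ) (ca3 κ) 0 t ↔ t = 2 ∨ t = 4 := by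
  constructor
  · intro h
    by_contra hc
    push_neg at hc
    exact absurd h.symm (ne_of_lt (interp_strict hκ ht0 ht4 hc.1 hc.2))
  · rintro (rfl | rfl)
    · rw [Psi0_at2]; simp [ca0]
    · rw [Psi0_at4]
      have := @ca_node4 κ; linarith

end interp

open Finset

abbrev ES3 := EuclideanSpace ℝ (Fin 3)

lemma inner_expand (u v : ES3) : (inner ℝ u v : ℝ) = ∑ a : Fin 3, u a * v a := by
  rw [PiLp.inner_apply]
  simp [RCLike.inner_apply, mul_comm]

lemma norm_sq_expand (u : ES3) (hu : ‖u‖ = 1) : ∑ a : Fin 3, u a ^ 2 = 1 := by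
  have h := real_inner_self_eq_norm_sq u
  rw [hu, inner_expand] at h
  simpa [pow_two] using h

section sums
variable (y : Fin 6 → ES3)

lemma S1_nonneg : (0:ℝ) ≤ ∑ i : Fin 6, ∑ j : Fin 6, (inner ℝ (y i) (y j) : ℝ) := by
  have h : (inner ℝ (∑ i, y i) (∑ j, y j) : ℝ) = ∑ i : Fin 6, ∑ j : Fin 6, (inner ℝ (y i) (y j) : ℝ) := by
    rw [sum_inner]
    exact Finset.sum_congr rfl fun i _ => inner_sum _ _ _
  rw [← h]
  exact real_inner_self_nonneg

lemma S2_ge (hy : ∀ i, ‖y i‖ = 1) :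
    (12:ℝ) ≤ ∑ i : Fin 6, ∑ j : Fin 6, (inner ℝ (y i) (y j) : ℝ)^2 := by
  classical
  set M : Fin 3 → Fin 3 → ℝ := fun a b => ∑ i, y i a * y i b with hM
  have hexp : ∀ i j : Fin 6, (inner ℝ (y i) (y j) : ℝ)^2
      = ∑ q : Fin 3 × Fin 3, (y i q.1 * y j q.1) * (y i q.2 * y j q.2) := by
    intro i j
    rw [inner_expand, pow_two, Finset.sum_mul_sum, Fintype.sum_prod_type]
  have swap : ∑ i : Fin 6, ∑ j : Fin 6, (inner ℝ (y i) (y j) : ℝ)^2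
      = ∑ q : Fin 3 × Fin 3, (M q.1 q.2)^2 := by
    calc ∑ i : Fin 6, ∑ j : Fin 6, (inner ℝ (y i) (y j) : ℝ)^2
        = ∑ p : Fin 6 × Fin 6, ∑ q : Fin 3 × Fin 3,
            (y p.1 q.1 * y p.2 q.1) * (y p.1 q.2 * y p.2 q.2) := by
          rw [Fintype.sum_prod_type]
          exact Finset.sum_congr rfl fun i _ => Finset.sum_congr rfl fun j _ => hexp i j
      _ = ∑ q : Fin 3 × Fin 3, ∑ p : Fin 6 × Fin 6,
            (y p.1 q.1 * y p.2 q.1) * (y p.1 q.2 * y p.2 q.2) := Finset.sum_comm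
      _ = ∑ q : Fin 3 × Fin 3, (M q.1 q.2)^2 := by
          refine Finset.sum_congr rfl fun q _ => ?_
          rw [Fintype.sum_prod_type, hM, pow_two, Finset.sum_mul_sum]
          exact Finset.sum_congr rfl fun i _ => Finset.sum_congr rfl fun j _ => by ring
  have htrace : M 0 0 + M 1 1 + M 2 2 = 6 := by
    have h : ∀ a : Fin 3, M a a = ∑ i : Fin 6, y i a ^2 := by
      intro a; rw [hM]; exact Finset.sum_congr rfl fun i _ => (pow_two _).symm
    have h2 : ∀ i : Fin 6, y i 0^2 + y i 1^2 + y i 2^2 = 1 := by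
      intro i
      have := norm_sq_expand (y i) (hy i)
      simpa [Fin.sum_univ_three] using this
    rw [h 0, h 1, h 2, ← Finset.sum_add_distrib, ← Finset.sum_add_distrib]
    rw [Finset.sum_congr rfl fun i _ => h2 i]
    simp
  rw [swap, Fintype.sum_prod_type]
  simp only [Fin.sum_univ_three]
  nlinarith [sq_nonneg (M 0 1), sq_nonneg (M 0 2), sq_nonneg (M 1 2), sq_nonneg (M 1 0),
    sq_nonneg (M 2 0), sq_nonneg (M 2 1),
    sq_nonneg (M 0 0 - M 1 1), sq_nonneg (M 0 0 - M 2 2), sq_nonneg (M 1 1 - M 2 2), htrace]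

noncomputable def ee (u : ES3) (q : Fin 3 × Fin 3 × Fin 3) : ℝ :=
  u q.1 * u q.2.1 * u q.2.2 - (1/5) * ((if q.1 = q.2.1 then (1:ℝ) else 0) * u q.2.2
    + (if q.2.1 = q.2.2 then (1:ℝ) else 0) * u q.1
    + (if q.1 = q.2.2 then (1:ℝ) else 0) * u q.2.1)

lemma pair3 (u v : ES3) (hu : ‖u‖ = 1) (hv : ‖v‖ = 1) :
    ∑ q : Fin 3 × Fin 3 × Fin 3, ee u q * ee v q
      = (inner ℝ u v : ℝ)^3 - (3/5) * (inner ℝ u v : ℝ) := by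
  have hu' := norm_sq_expand u hu
  have hv' := norm_sq_expand v hv
  rw [Fin.sum_univ_three] at hu' hv'
  rw [inner_expand, Fin.sum_univ_three]
  simp only [ee, Fintype.sum_prod_type, Fin.sum_univ_three]
  simp
  linear_combination (-(3/5) * (u 0 * v 0 + u 1 * v 1 + u 2 * v 2)) * hu'
    + (-(3/5) * (u 0 * v 0 + u 1 * v 1 + u 2 * v 2)) * hv'

lemma S3_ge (hy : ∀ i, ‖y i‖ = 1) :
    3 * (∑ i : Fin 6, ∑ j : Fin 6, (inner ℝ (y i) (y j) : ℝ))
      ≤ 5 * ∑ i : Fin 6, ∑ j : Fin 6, (inner ℝ (y i) (y j) : ℝ)^3 := by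
  classical
  have key : ∑ i : Fin 6, ∑ j : Fin 6, ((inner ℝ (y i) (y j) : ℝ)^3 - (3/5) * (inner ℝ (y i) (y j):ℝ))
      = ∑ q : Fin 3 × Fin 3 × Fin 3, (∑ i : Fin 6, ee (y i) q)^2 := by
    calc ∑ i : Fin 6, ∑ j : Fin 6, ((inner ℝ (y i) (y j) : ℝ)^3 - (3/5) * (inner ℝ (y i) (y j):ℝ))
        = ∑ p : Fin 6 × Fin 6, ∑ q : Fin 3 × Fin 3 × Fin 3, ee (y p.1) q * ee (y p.2) q := by
          rw [Fintype.sum_prod_type]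
          exact Finset.sum_congr rfl fun i _ => Finset.sum_congr rfl fun j _ =>
            (pair3 (y i) (y j) (hy i) (hy j)).symm
      _ = ∑ q : Fin 3 × Fin 3 × Fin 3, ∑ p : Fin 6 × Fin 6, ee (y p.1) q * ee (y p.2) q :=
          Finset.sum_comm
      _ = ∑ q : Fin 3 × Fin 3 × Fin 3, (∑ i : Fin 6, ee (y i) q)^2 := by
          refine Finset.sum_congr rfl fun q _ => ?_
          rw [pow_two, Finset.sum_mul_sum, Fintype.sum_prod_type]
  have hpos : (0:ℝ) ≤ ∑ q : Fin 3 × Fin 3 × Fin 3, (∑ i : Fin 6, ee (y i) q)^2 :=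
    Finset.sum_nonneg fun q _ => sq_nonneg _
  rw [← key] at hpos
  have expand : ∑ i : Fin 6, ∑ j : Fin 6, ((inner ℝ (y i) (y j) : ℝ)^3 - (3/5) * (inner ℝ (y i) (y j):ℝ))
      = (∑ i : Fin 6, ∑ j : Fin 6, (inner ℝ (y i) (y j) : ℝ)^3)
        - (3/5) * (∑ i : Fin 6, ∑ j : Fin 6, (inner ℝ (y i) (y j) : ℝ)) := by
    simp only [Finset.sum_sub_distrib, Finset.mul_sum]
  rw [expand] at hpos
  nlinarith [hpos]

end sums

open Finset


section Cpart
variable {κ : ℝ} {y : Fin 6 → ES3}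

/-- sum over offDiag as double sum minus diagonal -/
lemma sum_offDiag_eq (G : Fin 6 × Fin 6 → ℝ) :
    ∑ p ∈ Finset.univ.offDiag, G p
      = (∑ i : Fin 6, ∑ j : Fin 6, G (i,j)) - ∑ i : Fin 6, G (i,i) := by
  classical
  have h := Finset.sum_union (f := G) (Finset.disjoint_diag_offDiag (Finset.univ : Finset (Fin 6)))
  rw [Finset.diag_union_offDiag, Finset.sum_product, Finset.sum_diag] at h
  linarith

lemma t_eq (hs : ∀ j, ‖y j‖ = 1) (i j : Fin 6) :
    ‖y i - y j‖^2 = 2 - 2 * (inner ℝ (y i) (y j) : ℝ) := by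
  rw [norm_sub_sq_real, hs i, hs j]; ring

lemma inner_le_one (hs : ∀ j, ‖y j‖ = 1) (i j : Fin 6) :
    |(inner ℝ (y i) (y j) : ℝ)| ≤ 1 := by
  have := abs_real_inner_le_norm (y i) (y j)
  rwa [hs i, hs j, one_mul] at this

lemma t_pos (hdist : Function.Injective y) {i j : Fin 6} (hij : i ≠ j) :
    0 < ‖y i - y j‖ := by
  rw [norm_pos_iff, sub_ne_zero]
  exact fun h => hij (hdist h)

lemma anti_t (hs : ∀ j, ‖y j‖ = 1) {i j : Fin 6} (h : y j = - y i) :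
    ‖y i - y j‖^2 = 4 := by
  rw [t_eq hs, h, inner_neg_right, real_inner_self_eq_norm_sq, hs i]; norm_num

lemma orth_t (hs : ∀ j, ‖y j‖ = 1) {i j : Fin 6} (h : (inner ℝ (y i) (y j) : ℝ) = 0) :
    ‖y i - y j‖^2 = 2 := by
  rw [t_eq hs, h]; norm_num

lemma anti_of_inner_neg_one (hs : ∀ j, ‖y j‖ = 1) {i j : Fin 6}
    (h : (inner ℝ (y i) (y j) : ℝ) = -1) : y j = - y i := by
  have h1 : (inner ℝ (y i) (-(y j)) : ℝ) = 1 := by rw [inner_neg_right, h]; norm_num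
  have h2 : ‖-(y j)‖ = 1 := by rw [norm_neg]; exact hs j
  have := (inner_eq_one_iff_of_norm_eq_one (hs i) h2).1 h1
  rw [this]; simp

/-- the shared energy computation: one antipode each, all else orthogonal -/
lemma energy_formula (hκ : 0 < κ) (hs : ∀ j, ‖y j‖ = 1) (hdist : Function.Injective y)
    (hpartner : ∀ i, ∃ j, j ≠ i ∧ y j = - y i)
    (hdich : ∀ i j : Fin 6, i ≠ j → y j ≠ - y i → (inner ℝ (y i) (y j) : ℝ) = 0) :
    ∑ p ∈ Finset.univ.offDiag, FF0 κ (‖y p.1 - y p.2‖^2)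
      = 24 * FF0 κ 2 + 6 * FF0 κ 4 := by
  classical
  set Anti := (Finset.univ.offDiag).filter (fun p : Fin 6 × Fin 6 => y p.2 = - y p.1) with hAnti
  -- injectivity of the first projection on Anti
  have hinj : Set.InjOn (Prod.fst) (Anti : Set (Fin 6 × Fin 6)) := by
    intro p hp q hq hfst
    simp only [hAnti, Finset.coe_filter, Set.mem_setOf_eq] at hp hq
    have : y p.2 = y q.2 := by rw [hp.2, hq.2, hfst]
    exact Prod.ext hfst (hdist this)
  have hcard_le : Anti.card ≤ 6 := by
    have := Finset.card_le_card_of_injOn (t := (Finset.univ : Finset (Fin 6)))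
      Prod.fst (fun p _ => Finset.mem_univ p.1) hinj
    simpa using this
  have hcard_ge : 6 ≤ Anti.card := by
    classical
    have : (Finset.univ : Finset (Fin 6)).card ≤ Anti.card := by
      apply Finset.card_le_card_of_injOn (fun i => (i, Classical.choose (hpartner i)))
      · intro i _
        obtain ⟨hne, heq⟩ := Classical.choose_spec (hpartner i)
        simp only [hAnti, Finset.mem_coe, Finset.mem_filter, Finset.mem_offDiag]
        exact ⟨⟨Finset.mem_univ _, Finset.mem_univ _, fun h => hne h.symm⟩, heq⟩
      · intro i _ j _ h
        exact congrArg Prod.fst h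
    simpa using this
  have hcard : Anti.card = 6 := le_antisymm hcard_le hcard_ge
  have hsplit := Finset.sum_filter_add_sum_filter_not Finset.univ.offDiag
    (fun p : Fin 6 × Fin 6 => y p.2 = - y p.1) (fun p => FF0 κ (‖y p.1 - y p.2‖^2))
  have hA : ∑ p ∈ Anti, FF0 κ (‖y p.1 - y p.2‖^2) = 6 * FF0 κ 4 := by
    rw [Finset.sum_congr rfl (fun p hp => ?_), Finset.sum_const, hcard]
    · push_cast; ring
    · simp only [hAnti, Finset.mem_filter] at hp
      rw [anti_t hs hp.2]
  have hcardN : (Finset.univ.offDiag.filter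
      (fun p : Fin 6 × Fin 6 => ¬ (y p.2 = - y p.1))).card = 24 := by
    have h30 : (Finset.univ : Finset (Fin 6)).offDiag.card = 30 := by
      rw [Finset.offDiag_card]; simp
    have := Finset.card_filter_add_card_filter_not
      (s := (Finset.univ : Finset (Fin 6)).offDiag) (p := fun p : Fin 6 × Fin 6 => y p.2 = - y p.1)
    rw [← hAnti] at this
    omega
  have hB : ∑ p ∈ Finset.univ.offDiag.filter
      (fun p : Fin 6 × Fin 6 => ¬ (y p.2 = - y p.1)), FF0 κ (‖y p.1 - y p.2‖^2)
      = 24 * FF0 κ 2 := by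
    rw [Finset.sum_congr rfl (fun p hp => ?_), Finset.sum_const, hcardN]
    · push_cast; ring
    · simp only [Finset.mem_filter, Finset.mem_offDiag] at hp
      rw [orth_t hs (hdich p.1 p.2 hp.1.2.2 hp.2)]
  rw [← hsplit, hA, hB]
  ring

end Cpart

open Finset


section C2
variable {κ : ℝ} {y : Fin 6 → ES3}

lemma sum_Psi0_ge (hκ : 0 < κ) (hs : ∀ j, ‖y j‖ = 1) :
    24 * FF0 κ 2 + 6 * FF0 κ 4
      ≤ ∑ p ∈ Finset.univ.offDiag, Psi0 (ca0 κ) (ca1 κ) (ca2 κ) (ca3 κ) 0 (‖y p.1 - y p.2‖^2) := by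
  classical
  have hb1 : (0:ℝ) < -2 * ca1 κ := by have := ca1_neg hκ; linarith
  have hb2 : (0:ℝ) < 4 * ca2 κ - 8 * ca3 κ := by
    have := ca2_pos hκ; have := ca3_neg hκ; linarith
  have hb3 : (0:ℝ) < -8 * ca3 κ := by have := ca3_neg hκ; linarith
  set S1 := ∑ i : Fin 6, ∑ j : Fin 6, (inner ℝ (y i) (y j) : ℝ) with hS1def
  set S2 := ∑ i : Fin 6, ∑ j : Fin 6, (inner ℝ (y i) (y j) : ℝ)^2 with hS2def
  set S3 := ∑ i : Fin 6, ∑ j : Fin 6, (inner ℝ (y i) (y j) : ℝ)^3 with hS3def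
  have hS1 := S1_nonneg y
  have hS2 := S2_ge y hs
  have hS3 := S3_ge y hs
  rw [← hS1def] at hS1
  rw [← hS2def] at hS2
  rw [← hS1def, ← hS3def] at hS3
  have hHb : ∀ s : ℝ, Psi0 (ca0 κ) (ca1 κ) (ca2 κ) (ca3 κ) 0 (2 - 2*s)
      = ca0 κ + (-2*ca1 κ)*s + (4*ca2 κ - 8*ca3 κ)*s^2 + (-8*ca3 κ)*s^3 := by
    intro s; simp only [Psi0]; ring
  have hstep : ∑ p ∈ Finset.univ.offDiag, Psi0 (ca0 κ) (ca1 κ) (ca2 κ) (ca3 κ) 0 (‖y p.1 - y p.2‖^2)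
      = ∑ p ∈ Finset.univ.offDiag, (ca0 κ + (-2*ca1 κ)*(inner ℝ (y p.1) (y p.2):ℝ)
        + (4*ca2 κ - 8*ca3 κ)*(inner ℝ (y p.1) (y p.2):ℝ)^2
        + (-8*ca3 κ)*(inner ℝ (y p.1) (y p.2):ℝ)^3) := by
    refine Finset.sum_congr rfl fun p _ => ?_
    rw [t_eq hs p.1 p.2, hHb]
  have hsii : ∀ i : Fin 6, (inner ℝ (y i) (y i) : ℝ) = 1 := by
    intro i; rw [real_inner_self_eq_norm_sq, hs i]; norm_num
  have hdiag : ∑ i : Fin 6, (ca0 κ + (-2*ca1 κ)*(inner ℝ (y i) (y i):ℝ)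
        + (4*ca2 κ - 8*ca3 κ)*(inner ℝ (y i) (y i):ℝ)^2
        + (-8*ca3 κ)*(inner ℝ (y i) (y i):ℝ)^3)
      = 6 * (ca0 κ + (-2*ca1 κ) + (4*ca2 κ - 8*ca3 κ) + (-8*ca3 κ)) := by
    rw [Finset.sum_congr rfl fun i _ => by rw [hsii i]; try ring]
    rw [Finset.sum_const]
    simp only [Finset.card_univ, Fintype.card_fin, nsmul_eq_mul]
    push_cast
    ring
  have hdouble : ∑ i : Fin 6, ∑ j : Fin 6, (ca0 κ + (-2*ca1 κ)*(inner ℝ (y i) (y j):ℝ)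
        + (4*ca2 κ - 8*ca3 κ)*(inner ℝ (y i) (y j):ℝ)^2
        + (-8*ca3 κ)*(inner ℝ (y i) (y j):ℝ)^3)
      = 36 * ca0 κ + (-2*ca1 κ)*S1 + (4*ca2 κ - 8*ca3 κ)*S2 + (-8*ca3 κ)*S3 := by
    simp only [Finset.sum_add_distrib, ← Finset.mul_sum]
    rw [← hS1def, ← hS2def, ← hS3def]
    simp [Finset.sum_const]
    ring
  rw [hstep, sum_offDiag_eq, hdouble, hdiag]
  have hFF2 : FF0 κ 2 = ca0 κ := rfl
  have hFF4 : FF0 κ 4 = ca0 κ + 2 * ca1 κ + 4 * ca2 κ := ca_node4.symm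
  rw [hFF2, hFF4]
  nlinarith [mul_nonneg hb1.le hS1, mul_nonneg hb2.le (by linarith : (0:ℝ) ≤ S2 - 12),
    mul_nonneg hb3.le (by linarith : (0:ℝ) ≤ 5*S3 - 3*S1), mul_nonneg hb3.le hS1]

lemma E4pi_ge (hκ : 0 < κ) (hs : ∀ j, ‖y j‖ = 1) (hdist : Function.Injective y) :
    24 * FF0 κ 2 + 6 * FF0 κ 4
      ≤ ∑ p ∈ Finset.univ.offDiag, FF0 κ (‖y p.1 - y p.2‖^2) := by
  refine le_trans (sum_Psi0_ge hκ hs) (Finset.sum_le_sum fun p hp => ?_)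
  have hne : p.1 ≠ p.2 := (Finset.mem_offDiag.1 hp).2.2
  have h0 : 0 < ‖y p.1 - y p.2‖^2 := pow_pos (t_pos hdist hne) 2
  have h4 : ‖y p.1 - y p.2‖^2 ≤ 4 := by
    rw [t_eq hs]
    have := abs_le.1 (inner_le_one hs p.1 p.2)
    linarith [this.1]
  exact interp_le hκ h0 h4

/-- from equality: every off-diagonal squared distance is 2 or 4 -/
lemma eq_t_mem (hκ : 0 < κ) (hs : ∀ j, ‖y j‖ = 1) (hdist : Function.Injective y)
    (heq : ∑ p ∈ Finset.univ.offDiag, FF0 κ (‖y p.1 - y p.2‖^2)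
      = 24 * FF0 κ 2 + 6 * FF0 κ 4) :
    ∀ p ∈ (Finset.univ : Finset (Fin 6)).offDiag,
      ‖y p.1 - y p.2‖^2 = 2 ∨ ‖y p.1 - y p.2‖^2 = 4 := by
  classical
  have hbounds : ∀ p ∈ (Finset.univ : Finset (Fin 6)).offDiag,
      0 < ‖y p.1 - y p.2‖^2 ∧ ‖y p.1 - y p.2‖^2 ≤ 4 := by
    intro p hp
    have hne : p.1 ≠ p.2 := (Finset.mem_offDiag.1 hp).2.2
    constructor
    · exact pow_pos (t_pos hdist hne) 2
    · rw [t_eq hs]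
      have := abs_le.1 (inner_le_one hs p.1 p.2)
      linarith [this.1]
  have hptwise : ∀ p ∈ (Finset.univ : Finset (Fin 6)).offDiag,
      0 ≤ FF0 κ (‖y p.1 - y p.2‖^2)
        - Psi0 (ca0 κ) (ca1 κ) (ca2 κ) (ca3 κ) 0 (‖y p.1 - y p.2‖^2) := by
    intro p hp
    have := interp_le hκ (hbounds p hp).1 (hbounds p hp).2
    linarith
  have hsum0 : ∑ p ∈ Finset.univ.offDiag,
      (FF0 κ (‖y p.1 - y p.2‖^2)
        - Psi0 (ca0 κ) (ca1 κ) (ca2 κ) (ca3 κ) 0 (‖y p.1 - y p.2‖^2)) = 0 := by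
    rw [Finset.sum_sub_distrib]
    have h1 := sum_Psi0_ge (y := y) hκ hs
    have : ∑ p ∈ Finset.univ.offDiag,
        (FF0 κ (‖y p.1 - y p.2‖^2)
          - Psi0 (ca0 κ) (ca1 κ) (ca2 κ) (ca3 κ) 0 (‖y p.1 - y p.2‖^2)) ≥ 0 :=
      Finset.sum_nonneg hptwise
    rw [Finset.sum_sub_distrib] at this
    linarith
  have hzero := (Finset.sum_eq_zero_iff_of_nonneg hptwise).1 hsum0
  intro p hp
  have h := hzero p hp
  have heqp : FF0 κ (‖y p.1 - y p.2‖^2)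
      = Psi0 (ca0 κ) (ca1 κ) (ca2 κ) (ca3 κ) 0 (‖y p.1 - y p.2‖^2) := by linarith
  exact (interp_eq_iff hκ (hbounds p hp).1 (hbounds p hp).2).1 heqp

end C2

open Finset



section C3
variable {κ : ℝ} {y : Fin 6 → ES3}

lemma kernel_eq {r : ℝ} (hr : 0 < r) :
    resolventKernel3D κ r = FF0 κ (r^2) / (4 * Real.pi) := by
  unfold resolventKernel3D FF0
  rw [Real.sqrt_sq hr.le]
  have hπ : Real.pi ≠ 0 := Real.pi_ne_zero
  field_simp

lemma pair_orth {u v w : ES3} (huv : (inner ℝ u v : ℝ) = 0) (huw : (inner ℝ u w : ℝ) = 0)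
    (hvw : (inner ℝ v w : ℝ) = 0) {p q : ES3}
    (hp : p ∈ ({u, -u, v, -v, w, -w} : Set ES3)) (hq : q ∈ ({u, -u, v, -v, w, -w} : Set ES3))
    (hpq : p ≠ q) (hq' : q ≠ -p) : (inner ℝ p q : ℝ) = 0 := by
  simp only [Set.mem_insert_iff, Set.mem_singleton_iff] at hp hq
  rcases hp with rfl|rfl|rfl|rfl|rfl|rfl <;> rcases hq with rfl|rfl|rfl|rfl|rfl|rfl <;>
    first
      | exact absurd rfl hpq
      | exact absurd rfl hq'
      | exact absurd (neg_neg _).symm hq'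
      | assumption
      | (rw [real_inner_comm]; assumption)
      | (simp only [inner_neg_left, inner_neg_right, neg_neg, neg_eq_zero]
         first | assumption | (rw [real_inner_comm]; assumption))

/-- backward: octahedron achieves the value -/
lemma backward_energy (hκ : 0 < κ) (hs : ∀ j, ‖y j‖ = 1) (hdist : Function.Injective y)
    {u v w : ES3} (hu : ‖u‖ = 1) (hv : ‖v‖ = 1) (hw : ‖w‖ = 1)
    (huv : (inner ℝ u v : ℝ) = 0) (huw : (inner ℝ u w : ℝ) = 0) (hvw : (inner ℝ v w : ℝ) = 0)
    (hrange : Set.range y = {u, -u, v, -v, w, -w}) :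
    ∑ p ∈ Finset.univ.offDiag, FF0 κ (‖y p.1 - y p.2‖^2)
      = 24 * FF0 κ 2 + 6 * FF0 κ 4 := by
  have hmem : ∀ i, y i ∈ ({u, -u, v, -v, w, -w} : Set ES3) := fun i =>
    hrange ▸ Set.mem_range_self i
  have hneg : ∀ x ∈ ({u, -u, v, -v, w, -w} : Set ES3),
      -x ∈ ({u, -u, v, -v, w, -w} : Set ES3) := by
    intro x hx
    simp only [Set.mem_insert_iff, Set.mem_singleton_iff] at hx ⊢
    rcases hx with rfl|rfl|rfl|rfl|rfl|rfl <;> simp [neg_neg] <;> tauto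
  have hpartner : ∀ i, ∃ j, j ≠ i ∧ y j = - y i := by
    intro i
    have h1 : -y i ∈ Set.range y := by rw [hrange]; exact hneg _ (hmem i)
    obtain ⟨j, hj⟩ := h1
    refine ⟨j, fun h => ?_, hj⟩
    subst h
    have hzero : y j = 0 := by
      have h2 : (2:ℝ) • y j = 0 := by
        rw [two_smul]
        nth_rewrite 2 [hj]
        simp
      rcases smul_eq_zero.1 h2 with h | h
      · norm_num at h
      · exact h
    have hn := hs j
    rw [hzero, norm_zero] at hn
    norm_num at hn
  have hdich : ∀ i j : Fin 6, i ≠ j → y j ≠ - y i → (inner ℝ (y i) (y j) : ℝ) = 0 := by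
    intro i j hij hanti
    exact pair_orth huv huw hvw (hmem i) (hmem j) (fun h => hij (hdist h)) hanti
  exact energy_formula hκ hs hdist hpartner hdich

/-- forward construction from the equality case -/
lemma forward_construct (hκ : 0 < κ) (hs : ∀ j, ‖y j‖ = 1) (hdist : Function.Injective y)
    (heq : ∑ p ∈ Finset.univ.offDiag, FF0 κ (‖y p.1 - y p.2‖^2)
      = 24 * FF0 κ 2 + 6 * FF0 κ 4) :
    ∃ u v w : ES3, ‖u‖ = 1 ∧ ‖v‖ = 1 ∧ ‖w‖ = 1 ∧
      inner ℝ u v = (0:ℝ) ∧ inner ℝ u w = (0:ℝ) ∧ inner ℝ v w = (0:ℝ) ∧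
      Set.range y = {u, -u, v, -v, w, -w} := by
  classical
  have hT := eq_t_mem hκ hs hdist heq
  have hdich : ∀ i j : Fin 6, i ≠ j → (y j = - y i ∨ (inner ℝ (y i) (y j) : ℝ) = 0) := by
    intro i j hij
    have hp : (i,j) ∈ (Finset.univ : Finset (Fin 6)).offDiag := by
      simp [Finset.mem_offDiag, hij]
    rcases hT (i,j) hp with h2 | h4
    · right
      have := t_eq hs i j
      rw [h2] at this; linarith
    · left
      apply anti_of_inner_neg_one hs
      have := t_eq hs i j
      rw [h4] at this; linarith
  -- the antipodal pair set
  set Anti := (Finset.univ.offDiag).filter (fun p : Fin 6 × Fin 6 => y p.2 = - y p.1) with hAnti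
  have hinj : Set.InjOn (Prod.fst) (Anti : Set (Fin 6 × Fin 6)) := by
    intro p hp q hq hfst
    simp only [hAnti, Finset.coe_filter, Set.mem_setOf_eq] at hp hq
    have : y p.2 = y q.2 := by rw [hp.2, hq.2, hfst]
    exact Prod.ext hfst (hdist this)
  -- split the energy sum by Anti
  have hsplit := Finset.sum_filter_add_sum_filter_not Finset.univ.offDiag
    (fun p : Fin 6 × Fin 6 => y p.2 = - y p.1) (fun p => FF0 κ (‖y p.1 - y p.2‖^2))
  have hA : ∑ p ∈ Anti, FF0 κ (‖y p.1 - y p.2‖^2) = (Anti.card : ℝ) * FF0 κ 4 := by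
    have h1 : ∀ p ∈ Anti, FF0 κ (‖y p.1 - y p.2‖^2) = FF0 κ 4 := by
      intro p hp
      simp only [hAnti, Finset.mem_filter] at hp
      rw [anti_t hs hp.2]
    rw [Finset.sum_congr rfl h1, Finset.sum_const, nsmul_eq_mul]
  have hNanti : ∀ p ∈ Finset.univ.offDiag.filter
      (fun p : Fin 6 × Fin 6 => ¬ (y p.2 = - y p.1)), ‖y p.1 - y p.2‖^2 = 2 := by
    intro p hp
    simp only [Finset.mem_filter, Finset.mem_offDiag] at hp
    rcases hdich p.1 p.2 hp.1.2.2 with h | h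
    · exact absurd h hp.2
    · rw [t_eq hs, h]; norm_num
  have hB : ∑ p ∈ Finset.univ.offDiag.filter
      (fun p : Fin 6 × Fin 6 => ¬ (y p.2 = - y p.1)), FF0 κ (‖y p.1 - y p.2‖^2)
      = ((Finset.univ.offDiag.filter
          (fun p : Fin 6 × Fin 6 => ¬ (y p.2 = - y p.1))).card : ℝ) * FF0 κ 2 := by
    rw [Finset.sum_congr rfl (fun p hp => by rw [hNanti p hp]), Finset.sum_const, nsmul_eq_mul]
  have hcards : Anti.card + (Finset.univ.offDiag.filter
      (fun p : Fin 6 × Fin 6 => ¬ (y p.2 = - y p.1))).card = 30 := by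
    have h30 : (Finset.univ : Finset (Fin 6)).offDiag.card = 30 := by
      rw [Finset.offDiag_card]; simp
    have := Finset.card_filter_add_card_filter_not
      (s := (Finset.univ : Finset (Fin 6)).offDiag)
      (p := fun p : Fin 6 × Fin 6 => y p.2 = - y p.1)
    rw [← hAnti] at this
    omega
  have hcard6 : Anti.card = 6 := by
    have heq2 : (Anti.card : ℝ) * FF0 κ 4 + ((30 - Anti.card : ℕ) : ℝ) * FF0 κ 2
        = 24 * FF0 κ 2 + 6 * FF0 κ 4 := by
      have hn : (Finset.univ.offDiag.filter
          (fun p : Fin 6 × Fin 6 => ¬ (y p.2 = - y p.1))).card = 30 - Anti.card := by omega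
      rw [← hn, ← hA, ← hB, hsplit]
      exact heq
    have hcle : Anti.card ≤ 30 := by omega
    have hcast : ((30 - Anti.card : ℕ) : ℝ) = 30 - (Anti.card : ℝ) := by
      push_cast [hcle]; ring
    rw [hcast] at heq2
    have hprod : ((Anti.card : ℝ) - 6) * (FF0 κ 4 - FF0 κ 2) = 0 := by
      linear_combination heq2
    rcases mul_eq_zero.1 hprod with h | h
    · have : (Anti.card : ℝ) = 6 := by linarith
      exact_mod_cast this
    · have := FF0_strict_dec (κ := κ) hκ
      linarith
  -- every index has an antipodal partner
  have hpartner : ∀ i : Fin 6, ∃ j, j ≠ i ∧ y j = - y i := by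
    intro i
    have himg : Anti.image Prod.fst = Finset.univ := by
      apply Finset.eq_univ_of_card
      rw [Finset.card_image_of_injOn hinj, hcard6]
      simp
    have hi : i ∈ Anti.image Prod.fst := by rw [himg]; exact Finset.mem_univ i
    obtain ⟨p, hpA, hp1⟩ := Finset.mem_image.1 hi
    have hpo : p ∈ (Finset.univ : Finset (Fin 6)).offDiag ∧ y p.2 = - y p.1 := by
      simpa [hAnti, Finset.mem_filter] using hpA
    refine ⟨p.2, ?_, ?_⟩
    · rw [← hp1]
      exact fun h => (Finset.mem_offDiag.1 hpo.1).2.2 h.symm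
    · rw [← hp1]; exact hpo.2
  -- build the three axes
  obtain ⟨j0, hj0ne, hj0⟩ := hpartner 0
  have hanti_unique : ∀ i j k : Fin 6, y j = - y i → y k = - y i → j = k := by
    intro i j k hj hk
    exact hdist (hj.trans hk.symm)
  set i1 : Fin 6 := if j0 = 1 then 2 else 1 with hi1def
  have hi1_0 : i1 ≠ 0 := by
    rw [hi1def]; split_ifs <;> decide
  have hi1_j0 : i1 ≠ j0 := by
    rw [hi1def]; split_ifs with h
    · rw [h]; decide
    · exact fun hh => h hh.symm
  obtain ⟨j1, hj1ne, hj1⟩ := hpartner i1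
  have hj1_0 : j1 ≠ 0 := by
    intro h
    apply hi1_j0
    apply hdist
    rw [hj0]
    have : y 0 = - y i1 := by rw [← h]; exact hj1
    rw [this, neg_neg]
  have hj1_j0 : j1 ≠ j0 := by
    intro h
    apply hi1_0
    apply hdist
    have h1 : y j0 = - y i1 := by rw [← h]; exact hj1
    have h2 : y j0 = - y 0 := hj0
    have := h1.symm.trans h2
    exact neg_injective this
  -- pick i2 outside {0, j0, i1, j1}
  have hex : ∃ i2 : Fin 6, i2 ∉ ({0, j0, i1, j1} : Finset (Fin 6)) := by
    by_contra h
    push_neg at h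
    have hsub : (Finset.univ : Finset (Fin 6)) ⊆ {0, j0, i1, j1} := fun x _ => h x
    have hle := Finset.card_le_card hsub
    have h4 : ({0, j0, i1, j1} : Finset (Fin 6)).card ≤ 4 := by
      apply le_trans (Finset.card_insert_le _ _)
      have : ({j0, i1, j1} : Finset (Fin 6)).card ≤ 3 := by
        apply le_trans (Finset.card_insert_le _ _)
        have : ({i1, j1} : Finset (Fin 6)).card ≤ 2 := Finset.card_insert_le _ _
        simpa using Nat.succ_le_succ this
      omega
    simp at hle
    omega
  obtain ⟨i2, hi2mem⟩ := hex
  simp only [Finset.mem_insert, Finset.mem_singleton, not_or] at hi2mem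
  obtain ⟨hi2_0, hi2_j0, hi2_i1, hi2_j1⟩ := hi2mem
  obtain ⟨j2, hj2ne, hj2⟩ := hpartner i2
  have hj2_0 : j2 ≠ 0 := by
    intro h
    apply hi2_j0
    apply hdist
    rw [hj0]
    have : y 0 = - y i2 := by rw [← h]; exact hj2
    rw [this, neg_neg]
  have hj2_j0 : j2 ≠ j0 := by
    intro h
    apply hi2_0
    apply hdist
    have h1 : y j0 = - y i2 := by rw [← h]; exact hj2
    exact neg_injective (h1.symm.trans hj0)
  have hj2_i1 : j2 ≠ i1 := by
    intro h
    apply hi2_j1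
    apply hdist
    rw [hj1]
    have : y i1 = - y i2 := by rw [← h]; exact hj2
    rw [this, neg_neg]
  have hj2_j1 : j2 ≠ j1 := by
    intro h
    apply hi2_i1
    apply hdist
    have h1 : y j1 = - y i2 := by rw [← h]; exact hj2
    exact neg_injective (h1.symm.trans hj1)
  -- orthogonality of the axes
  have horth : ∀ i j : Fin 6, i ≠ j → y j ≠ - y i → (inner ℝ (y i) (y j) : ℝ) = 0 := by
    intro i j hij hanti
    rcases hdich i j hij with h | h
    · exact absurd h hanti
    · exact h
  have huv : (inner ℝ (y 0) (y i1) : ℝ) = 0 := by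
    apply horth 0 i1 (fun h => hi1_0 h.symm)
    intro h
    apply hi1_j0
    apply hdist
    rw [hj0, ← h]
  have huw : (inner ℝ (y 0) (y i2) : ℝ) = 0 := by
    apply horth 0 i2 (fun h => hi2_0 h.symm)
    intro h
    apply hi2_j0
    apply hdist
    rw [hj0, ← h]
  have hvw : (inner ℝ (y i1) (y i2) : ℝ) = 0 := by
    apply horth i1 i2 (fun h => hi2_i1 h.symm)
    intro h
    apply hi2_j1
    apply hdist
    rw [hj1, ← h]
  -- the index set is everything
  have hunivset : ({0, j0, i1, j1, i2, j2} : Finset (Fin 6)) = Finset.univ := by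
    apply Finset.eq_univ_of_card
    have hc : ({0, j0, i1, j1, i2, j2} : Finset (Fin 6)).card = 6 := by
      rw [Finset.card_insert_of_notMem (by
        simp only [Finset.mem_insert, Finset.mem_singleton, not_or]
        exact ⟨fun h => hj0ne h.symm, fun h => hi1_0 h.symm, fun h => hj1_0 h.symm,
          fun h => hi2_0 h.symm, fun h => hj2_0 h.symm⟩)]
      rw [Finset.card_insert_of_notMem (by
        simp only [Finset.mem_insert, Finset.mem_singleton, not_or]
        exact ⟨fun h => hi1_j0 h.symm, fun h => hj1_j0 h.symm,
          fun h => hi2_j0 h.symm, fun h => hj2_j0 h.symm⟩)]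
      rw [Finset.card_insert_of_notMem (by
        simp only [Finset.mem_insert, Finset.mem_singleton, not_or]
        exact ⟨fun h => hj1ne h.symm, fun h => hi2_i1 h.symm, fun h => hj2_i1 h.symm⟩)]
      rw [Finset.card_insert_of_notMem (by
        simp only [Finset.mem_insert, Finset.mem_singleton, not_or]
        exact ⟨fun h => hi2_j1 h.symm, fun h => hj2_j1 h.symm⟩)]
      rw [Finset.card_insert_of_notMem (by
        simp only [Finset.mem_singleton]
        exact fun h => hj2ne h.symm)]
      simp
    rw [hc]; simp
  refine ⟨y 0, y i1, y i2, hs 0, hs i1, hs i2, huv, huw, hvw, ?_⟩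
  ext x
  constructor
  · rintro ⟨k, rfl⟩
    have hk : k ∈ ({0, j0, i1, j1, i2, j2} : Finset (Fin 6)) := by
      rw [hunivset]; exact Finset.mem_univ k
    simp only [Finset.mem_insert, Finset.mem_singleton] at hk
    simp only [Set.mem_insert_iff, Set.mem_singleton_iff]
    rcases hk with rfl|rfl|rfl|rfl|rfl|rfl
    · tauto
    · rw [hj0]; tauto
    · tauto
    · rw [hj1]; tauto
    · tauto
    · rw [hj2]; tauto
  · intro hx
    simp only [Set.mem_insert_iff, Set.mem_singleton_iff] at hx
    rcases hx with rfl|rfl|rfl|rfl|rfl|rfl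
    · exact ⟨0, rfl⟩
    · exact ⟨j0, hj0⟩
    · exact ⟨i1, rfl⟩
    · exact ⟨j1, hj1⟩
    · exact ⟨i2, rfl⟩
    · exact ⟨j2, hj2⟩

end C3

theorem sphere_six_points_energy_min (κ : ℝ) (hκ : 0 < κ)
    (y : Fin 6 → EuclideanSpace ℝ (Fin 3)) (hsphere : ∀ j, ‖y j‖ = 1)
    (hdist : Function.Injective y) :
    interactionEnergy κ y ≥
      24 * resolventKernel3D κ (Real.sqrt 2) + 6 * resolventKernel3D κ 2 ∧
    (interactionEnergy κ y =
        24 * resolventKernel3D κ (Real.sqrt 2) + 6 * resolventKernel3D κ 2 ↔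
      ∃ u v w : EuclideanSpace ℝ (Fin 3),
        ‖u‖ = 1 ∧ ‖v‖ = 1 ∧ ‖w‖ = 1 ∧
        inner ℝ u v = (0 : ℝ) ∧ inner ℝ u w = (0 : ℝ) ∧ inner ℝ v w = (0 : ℝ) ∧
        Set.range y = {u, -u, v, -v, w, -w}) := by
  have hπ : (0:ℝ) < 4 * Real.pi := by positivity
  have hE : interactionEnergy κ y
      = (∑ p ∈ Finset.univ.offDiag, FF0 κ (‖y p.1 - y p.2‖^2)) / (4 * Real.pi) := by
    unfold interactionEnergy
    rw [Finset.sum_div]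
    refine Finset.sum_congr rfl fun p hp => ?_
    exact kernel_eq (t_pos hdist (Finset.mem_offDiag.1 hp).2.2)
  have hRHS : 24 * resolventKernel3D κ (Real.sqrt 2) + 6 * resolventKernel3D κ 2
      = (24 * FF0 κ 2 + 6 * FF0 κ 4) / (4 * Real.pi) := by
    rw [kernel_eq (κ := κ) (Real.sqrt_pos.2 (by norm_num : (0:ℝ) < 2)),
      kernel_eq (κ := κ) (by norm_num : (0:ℝ) < 2)]
    rw [Real.sq_sqrt (by norm_num : (0:ℝ) ≤ 2)]
    norm_num
    ring
  constructor
  · rw [ge_iff_le, hE, hRHS]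
    have h := E4pi_ge hκ hsphere hdist
    gcongr
  · constructor
    · intro h
      rw [hE, hRHS] at h
      have heq : ∑ p ∈ Finset.univ.offDiag, FF0 κ (‖y p.1 - y p.2‖^2)
          = 24 * FF0 κ 2 + 6 * FF0 κ 4 := by
        have := congrArg (fun z => z * (4 * Real.pi)) h
        simpa [div_mul_cancel₀, hπ.ne'] using this
      exact forward_construct hκ hsphere hdist heq
    · rintro ⟨u, v, w, hu, hv, hw, huv, huw, hvw, hrange⟩
      rw [hE, hRHS]
      rw [backward_energy hκ hsphere hdist hu hv hw huv huw hvw hrange]
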